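/- For every measurable f : (0,∞) → [0,∞), one has ‖S₂f‖ ≤ Ω⁺(b,a)·‖f‖; that is, ∫₀^∞ exp(2B(x)) ( ∫₀ˣ f(z)·exp(2B(z))·( ∫₀^z (1/a(t))·exp(−2B(t)) dt ) dz ) dx ≤ Ω⁺(b,a) · ∫₀^∞ f(x)·exp(2B(x)) dx. -/

import Mathlib

open MeasureTheory Set Filter
open scoped ENNReal

/-- `B(x) = ∫₀ˣ (b/a)(y) dy`. -/
noncomputable def Bfun (a b : ℝ → ℝ) (x : ℝ) : ℝ := ∫ y in (0:ℝ)..x, b y / a y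

/-- `‖f‖ = ∫₀^∞ f(x) e^{2B(x)} dx` for nonnegative (extended-real-valued) `f`. -/
noncomputable def wNorm (a b : ℝ → ℝ) (f : ℝ → ℝ≥0∞) : ℝ≥0∞ :=
  ∫⁻ x in Ioi (0:ℝ), f x * ENNReal.ofReal (Real.exp (2 * Bfun a b x))

/-- `S₁f(x) = (∫₀ˣ (1/a) e^{-2B} dz)(∫ₓ^∞ f e^{2B} dz)`. -/
noncomputable def S1 (a b : ℝ → ℝ) (f : ℝ → ℝ≥0∞) : ℝ → ℝ≥0∞ := fun x =>
  ENNReal.ofReal (∫ z in (0:ℝ)..x, (a z)⁻¹ * Real.exp (-2 * Bfun a b z)) *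
    ∫⁻ z in Ioi x, f z * ENNReal.ofReal (Real.exp (2 * Bfun a b z))

/-- `S₂f(x) = ∫₀ˣ f(z) e^{2B(z)} (∫₀^z (1/a) e^{-2B} dt) dz`. -/
noncomputable def S2 (a b : ℝ → ℝ) (f : ℝ → ℝ≥0∞) : ℝ → ℝ≥0∞ := fun x =>
  ∫⁻ z in Ioo (0:ℝ) x,
    f z * ENNReal.ofReal (Real.exp (2 * Bfun a b z) *
      ∫ t in (0:ℝ)..z, (a t)⁻¹ * Real.exp (-2 * Bfun a b t))

/-- `Ω⁺(b,a) = sup_{x>0} (∫₀ˣ (1/a) e^{-2B}) (∫ₓ^∞ e^{2B}) ∈ [0,∞]`. -/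
noncomputable def OmegaPlus (a b : ℝ → ℝ) : ℝ≥0∞ :=
  ⨆ x ∈ Ioi (0:ℝ),
    ENNReal.ofReal (∫ y in (0:ℝ)..x, (a y)⁻¹ * Real.exp (-2 * Bfun a b y)) *
      ∫⁻ y in Ioi x, ENNReal.ofReal (Real.exp (2 * Bfun a b y))

theorem stmt16 (a b : ℝ → ℝ)
    (ha : ContDiffOn ℝ 1 a (Ici 0)) (hapos : ∀ x ∈ Ici (0:ℝ), 0 < a x)
    (hb : ContinuousOn b (Ici 0))
    (hinf : ∫⁻ x in Ioi (0:ℝ),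
        ENNReal.ofReal ((a x)⁻¹ * Real.exp (-2 * Bfun a b x)) = ⊤)
    (hfin : ∫⁻ x in Ioi (0:ℝ), ENNReal.ofReal (Real.exp (2 * Bfun a b x)) < ⊤)
    (hΩ : OmegaPlus a b < ⊤)
    (f : ℝ → ℝ≥0∞) (hf : Measurable f) :
    wNorm a b (S2 a b f) ≤ OmegaPlus a b * wNorm a b f := by
  classical
  -- globally continuous replacements for `a`, `b`
  set ea : ℝ → ℝ := fun x => a (max x 0) with hea
  set eb : ℝ → ℝ := fun x => b (max x 0) with heb
  have hmax : ∀ x : ℝ, max x 0 ∈ Ici (0:ℝ) := fun x => mem_Ici.2 (le_max_right _ _)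
  have haC : Continuous ea :=
    ha.continuousOn.comp_continuous (continuous_id.max continuous_const) hmax
  have hbC : Continuous eb :=
    hb.comp_continuous (continuous_id.max continuous_const) hmax
  have heapos : ∀ x, 0 < ea x := fun x => hapos _ (hmax x)
  have hcC : Continuous fun x => eb x / ea x :=
    hbC.div haC fun x => (heapos x).ne'
  -- globally continuous version of B
  set B' : ℝ → ℝ := fun x => ∫ y in (0:ℝ)..x, eb y / ea y with hB'
  have hB'C : Continuous B' :=
    intervalIntegral.continuous_primitive (fun u v => (hcC.intervalIntegrable u v)) 0
  have hBeq : ∀ x ∈ Ici (0:ℝ), Bfun a b x = B' x := by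
    intro x hx
    apply intervalIntegral.integral_congr
    intro y hy
    rw [uIcc_of_le hx] at hy
    simp only [hea, heb, max_eq_left hy.1]
  -- globally continuous version of G
  set d : ℝ → ℝ := fun t => (ea t)⁻¹ * Real.exp (-2 * B' t) with hd
  have hdC : Continuous d :=
    (haC.inv₀ fun x => (heapos x).ne').mul
      (Real.continuous_exp.comp ((continuous_const).mul hB'C))
  set G' : ℝ → ℝ := fun z => ∫ t in (0:ℝ)..z, d t with hG'
  have hG'C : Continuous G' :=
    intervalIntegral.continuous_primitive (fun u v => (hdC.intervalIntegrable u v)) 0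
  have hGeq : ∀ z ∈ Ici (0:ℝ),
      (∫ t in (0:ℝ)..z, (a t)⁻¹ * Real.exp (-2 * Bfun a b t)) = G' z := by
    intro z hz
    apply intervalIntegral.integral_congr
    intro t ht
    rw [uIcc_of_le hz] at ht
    simp only [hd, hea, max_eq_left ht.1, hBeq t ht.1]
  -- measurable weight and integrand
  set w' : ℝ → ℝ≥0∞ := fun x => ENNReal.ofReal (Real.exp (2 * B' x)) with hw'
  have hw'M : Measurable w' :=
    (ENNReal.measurable_ofReal.comp
      (Real.continuous_exp.comp (continuous_const.mul hB'C)).measurable)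
  have hw'ne : ∀ x, w' x ≠ ⊤ := fun x => ENNReal.ofReal_ne_top
  set g' : ℝ → ℝ≥0∞ := fun z => f z * (w' z * ENNReal.ofReal (G' z)) with hg'
  have hg'M : Measurable g' :=
    hf.mul (hw'M.mul (ENNReal.measurable_ofReal.comp hG'C.measurable))
  -- the weight inside `wNorm` agrees with `w'` on `Ioi 0`
  have hwe : ∀ x ∈ Ioi (0:ℝ), ENNReal.ofReal (Real.exp (2 * Bfun a b x)) = w' x := by
    intro x hx
    rw [hBeq x (mem_Ici.2 (le_of_lt hx))]
  -- Rewrite wNorm (S2 f)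
  have hS2 : wNorm a b (S2 a b f)
      = ∫⁻ x in Ioi (0:ℝ), (∫⁻ z in Ioo (0:ℝ) x, g' z) * w' x := by
    unfold wNorm S2
    apply setLIntegral_congr_fun measurableSet_Ioi
    intro x hx
    dsimp only
    rw [hwe x hx]
    congr 1
    apply setLIntegral_congr_fun measurableSet_Ioo
    intro z hz
    dsimp only
    have hz0 : (0:ℝ) ≤ z := le_of_lt hz.1
    rw [ENNReal.ofReal_mul (Real.exp_pos _).le, hGeq z hz0, hBeq z hz0]
  -- Tonelli
  set F : ℝ × ℝ → ℝ≥0∞ :=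
    fun p => {q : ℝ × ℝ | q.2 < q.1}.indicator (fun q => g' q.2 * w' q.1) p with hF
  have hFM : Measurable F := by
    apply Measurable.indicator
    · exact (hg'M.comp measurable_snd).mul (hw'M.comp measurable_fst)
    · exact measurableSet_lt measurable_snd measurable_fst
  have hswap :
      (∫⁻ x in Ioi (0:ℝ), ∫⁻ z in Ioi (0:ℝ), F (x, z))
        = ∫⁻ z in Ioi (0:ℝ), ∫⁻ x in Ioi (0:ℝ), F (x, z) := by
    exact lintegral_lintegral_swap (f := fun x z => F (x, z)) (hFM.aemeasurable)
  -- Evaluate the LHS of the swap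
  have hleft : (∫⁻ x in Ioi (0:ℝ), ∫⁻ z in Ioi (0:ℝ), F (x, z))
      = ∫⁻ x in Ioi (0:ℝ), (∫⁻ z in Ioo (0:ℝ) x, g' z) * w' x := by
    apply setLIntegral_congr_fun measurableSet_Ioi
    intro x _
    have : ∀ z : ℝ, F (x, z) = (Iio x).indicator (fun z => g' z * w' x) z := by
      intro z
      by_cases h : z < x <;> simp [hF, indicator, h]
    simp_rw [this]
    rw [lintegral_indicator measurableSet_Iio, Measure.restrict_restrict measurableSet_Iio,
      show Iio x ∩ Ioi (0:ℝ) = Ioo 0 x from by rw [inter_comm]; rfl,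
      lintegral_mul_const' _ _ (hw'ne x)]
  -- Evaluate the RHS of the swap
  have hright : (∫⁻ z in Ioi (0:ℝ), ∫⁻ x in Ioi (0:ℝ), F (x, z))
      = ∫⁻ z in Ioi (0:ℝ), g' z * ∫⁻ x in Ioi z, w' x := by
    apply setLIntegral_congr_fun measurableSet_Ioi
    intro z hz
    have : ∀ x : ℝ, F (x, z) = (Ioi z).indicator (fun x => g' z * w' x) x := by
      intro x
      by_cases h : z < x <;> simp [hF, indicator, h]
    simp_rw [this]
    rw [lintegral_indicator measurableSet_Ioi, Measure.restrict_restrict measurableSet_Ioi,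
      show Ioi z ∩ Ioi (0:ℝ) = Ioi z from
        inter_eq_left.2 fun y hy => mem_Ioi.2 (lt_trans hz hy),
      lintegral_const_mul _ hw'M]
  -- Pointwise bound by OmegaPlus
  have hbound : ∀ z ∈ Ioi (0:ℝ),
      g' z * ∫⁻ x in Ioi z, w' x ≤ f z * w' z * OmegaPlus a b := by
    intro z hz
    have hterm : ENNReal.ofReal (G' z) * ∫⁻ x in Ioi z, w' x ≤ OmegaPlus a b := by
      have h1 : (∫⁻ x in Ioi z, w' x)
          = ∫⁻ y in Ioi z, ENNReal.ofReal (Real.exp (2 * Bfun a b y)) := by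
        apply setLIntegral_congr_fun measurableSet_Ioi
        intro y hy
        dsimp only
        rw [hBeq y (mem_Ici.2 (le_of_lt (lt_trans hz hy)))]
      rw [h1, ← hGeq z (mem_Ici.2 (le_of_lt hz))]
      exact le_iSup₂_of_le z hz le_rfl
    calc g' z * ∫⁻ x in Ioi z, w' x
        = f z * w' z * (ENNReal.ofReal (G' z) * ∫⁻ x in Ioi z, w' x) := by
          rw [hg']; ring
      _ ≤ f z * w' z * OmegaPlus a b := mul_le_mul_right hterm _
  -- Put it together
  have hwf : wNorm a b f = ∫⁻ z in Ioi (0:ℝ), f z * w' z := by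
    unfold wNorm
    apply setLIntegral_congr_fun measurableSet_Ioi
    intro x hx
    dsimp only
    rw [hwe x hx]
  calc wNorm a b (S2 a b f)
      = ∫⁻ z in Ioi (0:ℝ), g' z * ∫⁻ x in Ioi z, w' x := by
        rw [hS2, ← hleft, hswap, hright]
    _ ≤ ∫⁻ z in Ioi (0:ℝ), f z * w' z * OmegaPlus a b := by
        apply setLIntegral_mono_ae (by fun_prop)
        filter_upwards with z hz using hbound z hz
    _ = OmegaPlus a b * wNorm a b f := by
        rw [hwf, lintegral_mul_const' _ _ hΩ.ne, mul_comm]
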